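/- For N even, the kernel of −D⁰·D⁰ acting on periodic scalar grid functions on an N×N periodic grid is 4-dimensional, spanned by the Fourier modes ψ_{rs}(x_{ij}) = ω^{ir+js} with r,s ∈ {0, N/2}, where ω is a primitive N-th root of unity. -/

import Mathlib

set_option linter.unusedSectionVars false
set_option maxHeartbeats 1000000

/-- The periodic `N × N` grid, indexed by `ZMod N × ZMod N`. -/
abbrev Grid (N : ℕ) := ZMod N × ZMod N

/-- Unit index shifts in the two coordinate directions. -/
def gvec (N : ℕ) : Fin 2 → Grid N := ![(1, 0), (0, 1)]

/-- Centered difference operator `D⁰_α` (complex-valued), grid spacing `h`. -/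
noncomputable def D0c {N : ℕ} (h : ℝ) (α : Fin 2) (f : Grid N → ℂ) : Grid N → ℂ :=
  fun x => (f (x + gvec N α) - f (x - gvec N α)) / (2 * (h : ℂ))

/-- The Fourier mode `ψ_{rs}(x_{ij}) = ω^{ir + js}`. -/
def fmode {N : ℕ} (ω : ℂ) (r s : ℕ) : Grid N → ℂ :=
  fun x => ω ^ (x.1.val * r + x.2.val * s)

namespace KerAux

lemma neg_one_pow_mod (a : ℕ) : (-1 : ℂ) ^ a = (-1) ^ (a % 2) := by
  conv_lhs => rw [← Nat.div_add_mod a 2, pow_add, pow_mul]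
  simp

section
variable {N : ℕ} [NeZero N] {ω : ℂ}

lemma fm00 : fmode (N := N) ω 0 0 = fun _ => 1 := by funext x; simp [fmode]

lemma fm0h (hω2 : ω ^ (N / 2) = -1) :
    fmode (N := N) ω 0 (N / 2) = fun x => (-1 : ℂ) ^ x.2.val := by
  funext x; simp only [fmode, mul_zero, zero_add]; rw [pow_mul', hω2]

lemma fmh0 (hω2 : ω ^ (N / 2) = -1) :
    fmode (N := N) ω (N / 2) 0 = fun x => (-1 : ℂ) ^ x.1.val := by
  funext x; simp only [fmode, mul_zero, add_zero]; rw [pow_mul', hω2]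

lemma fmhh (hω2 : ω ^ (N / 2) = -1) :
    fmode (N := N) ω (N / 2) (N / 2) = fun x => (-1 : ℂ) ^ x.1.val * (-1 : ℂ) ^ x.2.val := by
  funext x
  simp only [fmode]
  rw [← add_mul, pow_mul', hω2, pow_add]

lemma val_parity (hdvd : 2 ∣ N) (x y : ZMod N) : (x + y).val % 2 = (x.val + y.val) % 2 := by
  rw [ZMod.val_add, Nat.mod_mod_of_dvd _ hdvd]

lemma val_two_parity (hdvd : 2 ∣ N) : (2 : ZMod N).val % 2 = 0 := by
  rw [show (2:ZMod N) = ((2:ℕ):ZMod N) by push_cast; ring, ZMod.val_natCast,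
    Nat.mod_mod_of_dvd _ hdvd]

lemma val_add_two_parity (hdvd : 2 ∣ N) (x : ZMod N) : (x + 2).val % 2 = x.val % 2 := by
  rw [val_parity hdvd]
  have := val_two_parity (N := N) hdvd
  omega

lemma hω2_of_primitive (hN : Even N) (hω : IsPrimitiveRoot ω N) : ω ^ (N / 2) = -1 := by
  have hdvd : 2 ∣ N := hN.two_dvd
  have h2 : 2 ≤ N := by have := NeZero.ne N; omega
  have hmul : ω ^ (N / 2) * ω ^ (N / 2) = 1 := by
    rw [← pow_add, show N / 2 + N / 2 = N by omega, hω.pow_eq_one]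
  rcases mul_self_eq_one_iff.mp hmul with h1 | h1
  · exact absurd h1 (hω.pow_ne_one_of_pos_of_lt (by omega) (by omega))
  · exact h1

/-- The submodule of functions invariant under shifts by `(2,0)` and `(0,2)`. -/
noncomputable def invSub (N : ℕ) [NeZero N] : Submodule ℂ (Grid N → ℂ) where
  carrier := {ψ | ∀ x : Grid N, ψ (x + (2,0)) = ψ x ∧ ψ (x + (0,2)) = ψ x}
  add_mem' := by
    intro f g hf hg x
    simp only [Pi.add_apply, (hf x).1, (hf x).2, (hg x).1, (hg x).2, and_self]
  zero_mem' := by intro x; simp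
  smul_mem' := by
    intro c f hf x
    simp only [Pi.smul_apply, (hf x).1, (hf x).2, and_self]

lemma invariant_to_ker {h : ℝ} (ψ : Grid N → ℂ)
    (hinv : ∀ x : Grid N, ψ (x + (2,0)) = ψ x ∧ ψ (x + (0,2)) = ψ x) :
    ∀ x, -(∑ α : Fin 2, D0c h α (D0c h α ψ) x) = 0 := by
  have h2 : ((1,0) : Grid N) + (1,0) = (2,0) := by rw [Prod.mk_add_mk]; norm_num
  have h2' : ((0,1) : Grid N) + (0,1) = (0,2) := by rw [Prod.mk_add_mk]; norm_num
  intro x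
  have e1 : ψ (x + (2,0)) = ψ x := (hinv x).1
  have e2 : ψ (x + (0,2)) = ψ x := (hinv x).2
  have e3 : ψ (x - (2,0)) = ψ x := by
    conv_rhs => rw [show x = (x - (2,0)) + (2,0) by ring]
    exact ((hinv _).1).symm
  have e4 : ψ (x - (0,2)) = ψ x := by
    conv_rhs => rw [show x = (x - (0,2)) + (0,2) by ring]
    exact ((hinv _).2).symm
  simp only [Fin.sum_univ_two, D0c, gvec, Matrix.cons_val_zero, Matrix.cons_val_one,
    Matrix.head_cons, add_sub_cancel_right, sub_add_cancel, add_assoc, sub_sub, h2, h2',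
    e1, e2, e3, e4]
  ring

lemma grid_sum_shift (v : Grid N) (F : Grid N → ℂ) :
    ∑ x : Grid N, F (x + v) = ∑ x : Grid N, F x :=
  Fintype.sum_equiv (Equiv.addRight v) _ _ (fun _ => rfl)

lemma energy (ψ : Grid N → ℂ) (v : Grid N) :
    ∑ x : Grid N, (starRingEnd ℂ) (ψ x) * (ψ (x + v) + ψ (x - v) - 2 * ψ x)
      = -∑ x : Grid N, (Complex.normSq (ψ (x + v) - ψ x) : ℂ) := by
  have h3 : ∀ z : ℂ, (Complex.normSq z : ℂ) = (starRingEnd ℂ) z * z := fun z => by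
    rw [mul_comm, Complex.mul_conj]
  have h1 : ∑ x : Grid N, (starRingEnd ℂ) (ψ x) * ψ (x - v)
      = ∑ x : Grid N, (starRingEnd ℂ) (ψ (x + v)) * ψ x := by
    have := grid_sum_shift v (fun x => (starRingEnd ℂ) (ψ x) * ψ (x - v))
    simpa using this.symm
  have h2 : ∑ x : Grid N, (starRingEnd ℂ) (ψ (x + v)) * ψ (x + v)
      = ∑ x : Grid N, (starRingEnd ℂ) (ψ x) * ψ x :=
    grid_sum_shift v (fun x => (starRingEnd ℂ) (ψ x) * ψ x)
  have key : ∀ x : Grid N, (starRingEnd ℂ) (ψ x) * (ψ (x + v) + ψ (x - v) - 2 * ψ x)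
      = ((starRingEnd ℂ) (ψ x) * ψ (x - v) - (starRingEnd ℂ) (ψ (x + v)) * ψ x)
        + ((starRingEnd ℂ) (ψ (x + v)) * ψ (x + v) - (starRingEnd ℂ) (ψ x) * ψ x)
        - (Complex.normSq (ψ (x + v) - ψ x) : ℂ) := by
    intro x
    rw [h3, map_sub]; ring
  rw [Finset.sum_congr rfl fun x _ => key x, Finset.sum_sub_distrib, Finset.sum_add_distrib,
    Finset.sum_sub_distrib, Finset.sum_sub_distrib, h1, h2]
  ring

lemma ker_to_invariant {h : ℝ} (hh : h ≠ 0) (ψ : Grid N → ℂ)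
    (hker : ∀ x, -(∑ α : Fin 2, D0c h α (D0c h α ψ) x) = 0) :
    ∀ x : Grid N, ψ (x + (2,0)) = ψ x ∧ ψ (x + (0,2)) = ψ x := by
  have h2 : ((1,0) : Grid N) + (1,0) = (2,0) := by rw [Prod.mk_add_mk]; norm_num
  have h2' : ((0,1) : Grid N) + (0,1) = (0,2) := by rw [Prod.mk_add_mk]; norm_num
  have hhc : (h : ℂ) ≠ 0 := Complex.ofReal_ne_zero.mpr hh
  have hstep : ∀ x : Grid N, (ψ (x + (2,0)) + ψ (x - (2,0)) - 2 * ψ x)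
      + (ψ (x + (0,2)) + ψ (x - (0,2)) - 2 * ψ x) = 0 := by
    intro x
    have := hker x
    simp only [Fin.sum_univ_two, D0c, gvec, Matrix.cons_val_zero, Matrix.cons_val_one,
      Matrix.head_cons, add_sub_cancel_right, sub_add_cancel, add_assoc, sub_sub, h2, h2'] at this
    field_simp at this
    linear_combination -this
  have hz : (0 : ℂ) = -∑ x : Grid N, (Complex.normSq (ψ (x + (2,0)) - ψ x) : ℂ)
      + -∑ x : Grid N, (Complex.normSq (ψ (x + (0,2)) - ψ x) : ℂ) := by
    rw [← energy, ← energy, ← Finset.sum_add_distrib]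
    rw [Finset.sum_congr rfl fun x _ => by rw [← mul_add, hstep x, mul_zero]]
    simp
  have hz' : ((∑ x : Grid N, Complex.normSq (ψ (x + (2,0)) - ψ x))
      + (∑ x : Grid N, Complex.normSq (ψ (x + (0,2)) - ψ x)) : ℝ) = 0 := by
    have : ((((∑ x : Grid N, Complex.normSq (ψ (x + (2,0)) - ψ x))
      + (∑ x : Grid N, Complex.normSq (ψ (x + (0,2)) - ψ x)) : ℝ)) : ℂ) = 0 := by
      push_cast
      linear_combination hz
    exact_mod_cast this
  have s1 : (∑ x : Grid N, Complex.normSq (ψ (x + (2,0)) - ψ x)) = 0 ∧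
      (∑ x : Grid N, Complex.normSq (ψ (x + (0,2)) - ψ x)) = 0 := by
    constructor <;>
    · nlinarith [Finset.sum_nonneg (fun x (_ : x ∈ Finset.univ) =>
          Complex.normSq_nonneg (ψ (x + ((2,0):Grid N)) - ψ x)),
        Finset.sum_nonneg (fun x (_ : x ∈ Finset.univ) =>
          Complex.normSq_nonneg (ψ (x + ((0,2):Grid N)) - ψ x))]
  intro x
  constructor
  · have := (Finset.sum_eq_zero_iff_of_nonneg
      (fun y (_ : y ∈ Finset.univ) => Complex.normSq_nonneg (ψ (y + ((2,0):Grid N)) - ψ y))).mp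
      s1.1 x (Finset.mem_univ x)
    rw [Complex.normSq_eq_zero, sub_eq_zero] at this
    exact this
  · have := (Finset.sum_eq_zero_iff_of_nonneg
      (fun y (_ : y ∈ Finset.univ) => Complex.normSq_nonneg (ψ (y + ((0,2):Grid N)) - ψ y))).mp
      s1.2 x (Finset.mem_univ x)
    rw [Complex.normSq_eq_zero, sub_eq_zero] at this
    exact this

lemma modes_invariant (hN : Even N) (hω2 : ω ^ (N / 2) = -1) (r s : ℕ)
    (hr : r = 0 ∨ r = N / 2) (hs : s = 0 ∨ s = N / 2) :
    fmode (N := N) ω r s ∈ invSub N := by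
  have hdvd : 2 ∣ N := hN.two_dvd
  have key : ∀ (a : ℕ) (z : ZMod N), (-1 : ℂ) ^ (z + 2).val = (-1) ^ z.val := by
    intro a z
    rw [neg_one_pow_mod, val_add_two_parity hdvd, ← neg_one_pow_mod]
  intro x
  have p1 : (x + ((2,0) : Grid N)).1 = x.1 + 2 := rfl
  have p2 : (x + ((2,0) : Grid N)).2 = x.2 := by
    show x.2 + 0 = x.2; rw [add_zero]
  have q1 : (x + ((0,2) : Grid N)).1 = x.1 := by
    show x.1 + 0 = x.1; rw [add_zero]
  have q2 : (x + ((0,2) : Grid N)).2 = x.2 + 2 := rfl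
  rcases hr with hr | hr <;> rcases hs with hs | hs <;> subst hr <;> subst hs
  · rw [fm00]; exact ⟨rfl, rfl⟩
  · rw [fm0h hω2]
    exact ⟨by simp only [p2], by simp only [q2, key 0 x.2]⟩
  · rw [fmh0 hω2]
    exact ⟨by simp only [p1, key 0 x.1], by simp only [q1]⟩
  · rw [fmhh hω2]
    exact ⟨by simp only [p1, p2, key 0 x.1], by simp only [q1, q2, key 0 x.2]⟩

lemma invariant_mem_span (hN : Even N) (hω2 : ω ^ (N / 2) = -1) (ψ : Grid N → ℂ)
    (hinv : ∀ x : Grid N, ψ (x + (2,0)) = ψ x ∧ ψ (x + (0,2)) = ψ x) :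
    ψ ∈ Submodule.span ℂ ({fmode ω 0 0, fmode ω 0 (N / 2), fmode ω (N / 2) 0,
        fmode ω (N / 2) (N / 2)} : Set (Grid N → ℂ)) := by
  have hdvd : 2 ∣ N := hN.two_dvd
  -- iterated invariance
  have inv1 : ∀ (k : ℕ) (x : Grid N), ψ (x + (((2 * k : ℕ) : ZMod N), 0)) = ψ x := by
    intro k
    induction k with
    | zero => intro x; simp; show ψ (x + 0) = ψ x; rw [add_zero]
    | succ n ih =>
      intro x
      have hx : x + (((2 * (n + 1) : ℕ) : ZMod N), 0)
          = (x + (((2 * n : ℕ) : ZMod N), 0)) + (2, 0) := by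
        rw [add_assoc]
        congr 1
        rw [Prod.mk_add_mk]
        congr 1
        · push_cast; ring
        · rw [add_zero]
      rw [hx, (hinv _).1, ih]
  have inv2 : ∀ (k : ℕ) (x : Grid N), ψ (x + (0, ((2 * k : ℕ) : ZMod N))) = ψ x := by
    intro k
    induction k with
    | zero => intro x; simp; show ψ (x + 0) = ψ x; rw [add_zero]
    | succ n ih =>
      intro x
      have hx : x + (0, ((2 * (n + 1) : ℕ) : ZMod N))
          = (x + (0, ((2 * n : ℕ) : ZMod N))) + (0, 2) := by
        rw [add_assoc]
        congr 1
        rw [Prod.mk_add_mk]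
        congr 1
        · rw [add_zero]
        · push_cast; ring
      rw [hx, (hinv _).2, ih]
  have hbase : ∀ x : Grid N,
      ψ x = ψ (((x.1.val % 2 : ℕ) : ZMod N), ((x.2.val % 2 : ℕ) : ZMod N)) := by
    intro x
    have hx : x = ((((x.1.val % 2 : ℕ) : ZMod N), ((x.2.val % 2 : ℕ) : ZMod N))
        + (((2 * (x.1.val / 2) : ℕ) : ZMod N), 0)) + (0, ((2 * (x.2.val / 2) : ℕ) : ZMod N)) := by
      rw [Prod.mk_add_mk, Prod.mk_add_mk]
      have e1 : ((x.1.val % 2 : ℕ) : ZMod N) + ((2 * (x.1.val / 2) : ℕ) : ZMod N) + 0 = x.1 := by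
        rw [add_zero, ← Nat.cast_add, show x.1.val % 2 + 2 * (x.1.val / 2) = x.1.val from by omega]
        simp [ZMod.natCast_val, ZMod.cast_id]
      have e2 : ((x.2.val % 2 : ℕ) : ZMod N) + 0 + ((2 * (x.2.val / 2) : ℕ) : ZMod N) = x.2 := by
        rw [add_zero, ← Nat.cast_add, show x.2.val % 2 + 2 * (x.2.val / 2) = x.2.val from by omega]
        simp [ZMod.natCast_val, ZMod.cast_id]
      rw [e1, e2]
    conv_lhs => rw [hx, inv2, inv1]
  -- the explicit linear combination
  set w00 := ψ (0, 0) with hw00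
  set w01 := ψ (0, 1) with hw01
  set w10 := ψ (1, 0) with hw10
  set w11 := ψ (1, 1) with hw11
  have claim : ψ = ((w00 + w01 + w10 + w11) / 4) • fmode ω 0 0
      + ((w00 - w01 + w10 - w11) / 4) • fmode ω 0 (N / 2)
      + ((w00 + w01 - w10 - w11) / 4) • fmode ω (N / 2) 0
      + ((w00 - w01 - w10 + w11) / 4) • fmode ω (N / 2) (N / 2) := by
    funext x
    rw [fm00, fm0h hω2, fmh0 hω2, fmhh hω2]
    simp only [Pi.add_apply, Pi.smul_apply, smul_eq_mul]
    rw [hbase x, neg_one_pow_mod x.1.val, neg_one_pow_mod x.2.val]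
    rcases Nat.mod_two_eq_zero_or_one x.1.val with hp | hp <;>
      rcases Nat.mod_two_eq_zero_or_one x.2.val with hq | hq <;>
      rw [hp, hq] <;>
      simp only [Nat.cast_zero, Nat.cast_one, pow_zero, pow_one] <;>
      ring
  rw [claim]
  have m1 : fmode (N := N) ω 0 0 ∈ ({fmode ω 0 0, fmode ω 0 (N / 2), fmode ω (N / 2) 0,
      fmode ω (N / 2) (N / 2)} : Set (Grid N → ℂ)) := by left; rfl
  have m2 : fmode (N := N) ω 0 (N / 2) ∈ ({fmode ω 0 0, fmode ω 0 (N / 2), fmode ω (N / 2) 0,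
      fmode ω (N / 2) (N / 2)} : Set (Grid N → ℂ)) := by right; left; rfl
  have m3 : fmode (N := N) ω (N / 2) 0 ∈ ({fmode ω 0 0, fmode ω 0 (N / 2), fmode ω (N / 2) 0,
      fmode ω (N / 2) (N / 2)} : Set (Grid N → ℂ)) := by right; right; left; rfl
  have m4 : fmode (N := N) ω (N / 2) (N / 2) ∈ ({fmode ω 0 0, fmode ω 0 (N / 2),
      fmode ω (N / 2) 0, fmode ω (N / 2) (N / 2)} : Set (Grid N → ℂ)) := by
    right; right; right; exact Set.mem_singleton _
  exact Submodule.add_mem _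
    (Submodule.add_mem _
      (Submodule.add_mem _
        (Submodule.smul_mem _ _ (Submodule.subset_span m1))
        (Submodule.smul_mem _ _ (Submodule.subset_span m2)))
      (Submodule.smul_mem _ _ (Submodule.subset_span m3)))
    (Submodule.smul_mem _ _ (Submodule.subset_span m4))

end

end KerAux

/-- For `N` even, the kernel of `−D⁰·D⁰` on periodic scalar grid functions is
4-dimensional, spanned by the Fourier modes `ψ_{rs}` with `r, s ∈ {0, N/2}`,
`ω` a primitive `N`-th root of unity. -/
theorem ker_centered_laplacian_four_dimensional {N : ℕ} [NeZero N]
    (hN : Even N) {h : ℝ} (hh : h ≠ 0) {ω : ℂ} (hω : IsPrimitiveRoot ω N) :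
    {ψ : Grid N → ℂ | ∀ x, -(∑ α : Fin 2, D0c h α (D0c h α ψ) x) = 0}
      = ↑(Submodule.span ℂ
          ({fmode ω 0 0, fmode ω 0 (N / 2), fmode ω (N / 2) 0,
            fmode ω (N / 2) (N / 2)} : Set (Grid N → ℂ)))
    ∧ Module.finrank ℂ (Submodule.span ℂ
          ({fmode ω 0 0, fmode ω 0 (N / 2), fmode ω (N / 2) 0,
            fmode ω (N / 2) (N / 2)} : Set (Grid N → ℂ))) = 4 := by
  have hω2 : ω ^ (N / 2) = -1 := KerAux.hω2_of_primitive hN hω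
  have hdvd : 2 ∣ N := hN.two_dvd
  have h2N : 2 ≤ N := by have := NeZero.ne N; omega
  constructor
  · apply Set.Subset.antisymm
    · intro ψ hψ
      exact KerAux.invariant_mem_span hN hω2 ψ (KerAux.ker_to_invariant hh ψ hψ)
    · intro ψ hψ
      have hle : Submodule.span ℂ ({fmode ω 0 0, fmode ω 0 (N / 2), fmode ω (N / 2) 0,
          fmode ω (N / 2) (N / 2)} : Set (Grid N → ℂ)) ≤ KerAux.invSub N := by
        rw [Submodule.span_le]
        intro f hf
        simp only [Set.mem_insert_iff, Set.mem_singleton_iff] at hf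
        rcases hf with rfl | rfl | rfl | rfl
        · exact KerAux.modes_invariant hN hω2 0 0 (Or.inl rfl) (Or.inl rfl)
        · exact KerAux.modes_invariant hN hω2 0 (N / 2) (Or.inl rfl) (Or.inr rfl)
        · exact KerAux.modes_invariant hN hω2 (N / 2) 0 (Or.inr rfl) (Or.inl rfl)
        · exact KerAux.modes_invariant hN hω2 (N / 2) (N / 2) (Or.inr rfl) (Or.inr rfl)
      exact KerAux.invariant_to_ker ψ (hle hψ)
  · -- finrank = 4
    set v : Fin 4 → (Grid N → ℂ) :=
      ![fmode ω 0 0, fmode ω 0 (N / 2), fmode ω (N / 2) 0, fmode ω (N / 2) (N / 2)] with hv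
    have hrange : ({fmode ω 0 0, fmode ω 0 (N / 2), fmode ω (N / 2) 0,
        fmode ω (N / 2) (N / 2)} : Set (Grid N → ℂ)) = Set.range v := by
      ext f
      simp only [Set.mem_insert_iff, Set.mem_singleton_iff, Set.mem_range, hv]
      constructor
      · rintro (rfl | rfl | rfl | rfl)
        exacts [⟨0, rfl⟩, ⟨1, rfl⟩, ⟨2, rfl⟩, ⟨3, rfl⟩]
      · rintro ⟨i, rfl⟩
        fin_cases i <;> simp
    have hval1 : (1 : ZMod N).val = 1 := by
      rw [ZMod.val_one_eq_one_mod, Nat.mod_eq_of_lt (by omega)]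
    have hli : LinearIndependent ℂ v := by
      rw [Fintype.linearIndependent_iff]
      intro g hg
      have hev : ∀ pt : Grid N, g 0 * fmode ω 0 0 pt + g 1 * fmode ω 0 (N / 2) pt
          + g 2 * fmode ω (N / 2) 0 pt + g 3 * fmode ω (N / 2) (N / 2) pt = 0 := by
        intro pt
        have := congrFun hg pt
        simpa [Fin.sum_univ_four, hv] using this
      have e00 := hev (0, 0)
      have e01 := hev (0, 1)
      have e10 := hev (1, 0)
      have e11 := hev (1, 1)
      rw [KerAux.fm00, KerAux.fm0h hω2, KerAux.fmh0 hω2, KerAux.fmhh hω2] at e00 e01 e10 e11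
      simp only [ZMod.val_zero, hval1, pow_zero, pow_one, mul_one] at e00 e01 e10 e11
      intro i
      fin_cases i
      · show g 0 = 0; linear_combination (e00 + e01 + e10 + e11) / 4
      · show g 1 = 0; linear_combination (e00 - e01 + e10 - e11) / 4
      · show g 2 = 0; linear_combination (e00 + e01 - e10 - e11) / 4
      · show g 3 = 0; linear_combination (e00 - e01 - e10 + e11) / 4
    rw [hrange, finrank_span_eq_card hli]
    simp
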